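/- Let R be a UFD and let f ∈ R[x_1,…,x_n] be a non-constant polynomial. Denote by c(g) the greatest common divisor in R of the coefficients of a polynomial g ∈ R[x_1,…,x_n]. Then the following are equivalent: (1) c(f − f(0,…,0)) is a unit of R; (2) Q(R)[f] ∩ R[x_1,…,x_n] = R[f]. -/

import Mathlib

open MvPolynomial

/-- A ring hom applied coefficientwise commutes with `Polynomial.aeval` at an
`MvPolynomial`. -/
lemma map_polyAeval {S T : Type*} [CommRing S] [CommRing T] {n : ℕ} (h : S →+* T)
    (f : MvPolynomial (Fin n) S) (Q : Polynomial S) :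
    MvPolynomial.map h (Polynomial.aeval f Q) =
      Polynomial.aeval (MvPolynomial.map h f) (Q.map h) := by
  have hcomp : (MvPolynomial.map h).comp (algebraMap S (MvPolynomial (Fin n) S)) =
      (algebraMap T (MvPolynomial (Fin n) T)).comp h := by
    ext r
    simp [MvPolynomial.algebraMap_eq]
  rw [Polynomial.aeval_def, Polynomial.aeval_def, Polynomial.eval₂_map,
    Polynomial.hom_eval₂, hcomp]

/-- A multivariate polynomial over a domain having a nonzero coefficient at a
nonzero monomial is transcendental over the base ring. -/
lemma aux_transcendental {S : Type*} [CommRing S] [IsDomain S] {n : ℕ}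
    (f : MvPolynomial (Fin n) S) (m : Fin n →₀ ℕ) (hm : m ≠ 0) (hc : f.coeff m ≠ 0) :
    Transcendental S f := by
  obtain ⟨j, hj⟩ : ∃ j, m j ≠ 0 := by
    by_contra h
    push_neg at h
    exact hm (Finsupp.ext h)
  cases n with
  | zero => exact j.elim0
  | succ k =>
    set e := Equiv.swap (0 : Fin (k + 1)) j with he
    set f' := rename e f with hf'
    have hcoeff : f'.coeff (m.mapDomain e) ≠ 0 := by
      rw [hf', MvPolynomial.coeff_rename_mapDomain e e.injective]
      exact hc
    have hmem : m.mapDomain e ∈ f'.support := by rwa [MvPolynomial.mem_support_iff]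
    have h0 : (m.mapDomain e) 0 ≠ 0 := by
      have : e j = 0 := Equiv.swap_apply_right 0 j
      rw [← this, Finsupp.mapDomain_apply e.injective]
      exact hj
    have hdeg : degreeOf 0 f' ≠ 0 := by
      intro hzero
      have h1 : degreeOf 0 f' < 1 := by rw [hzero]; exact Nat.zero_lt_one
      have := (MvPolynomial.degreeOf_lt_iff Nat.zero_lt_one).mp h1 _ hmem
      omega
    set p := MvPolynomial.finSuccEquiv S k f' with hp
    have hpdeg : p.natDegree ≠ 0 := by
      rw [hp, MvPolynomial.natDegree_finSuccEquiv]
      exact hdeg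
    have hp0 : p ≠ 0 := by
      intro h
      apply hpdeg
      rw [h, Polynomial.natDegree_zero]
    have htr : Transcendental (MvPolynomial (Fin k) S) p := by
      have := (Polynomial.transcendental_X (MvPolynomial (Fin k) S)).aeval p hpdeg
        (mem_nonZeroDivisors_of_ne_zero (Polynomial.leadingCoeff_ne_zero.mpr hp0))
      rwa [Polynomial.aeval_X_left_apply] at this
    rw [transcendental_iff]
    intro Q hQ
    have h3 : Polynomial.aeval f' Q = 0 := by
      have h4 : Polynomial.aeval ((rename e) f) Q = (rename e) (Polynomial.aeval f Q) :=
        Polynomial.aeval_algHom_apply (rename e) f Q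
      rw [hf', h4, hQ, map_zero]
    have h5 : Polynomial.aeval p (Q.map (algebraMap S (MvPolynomial (Fin k) S))) = 0 := by
      rw [Polynomial.aeval_map_algebraMap]
      have h6 : Polynomial.aeval ((MvPolynomial.finSuccEquiv S k).toAlgHom f') Q =
          (MvPolynomial.finSuccEquiv S k).toAlgHom (Polynomial.aeval f' Q) :=
        Polynomial.aeval_algHom_apply (MvPolynomial.finSuccEquiv S k).toAlgHom f' Q
      rw [hp]
      show Polynomial.aeval ((MvPolynomial.finSuccEquiv S k).toAlgHom f') Q = 0
      rw [h6, h3, map_zero]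
    have h7 := (transcendental_iff.mp htr) _ h5
    have h8 : Function.Injective (algebraMap S (MvPolynomial (Fin k) S)) := by
      rw [MvPolynomial.algebraMap_eq]
      exact MvPolynomial.C_injective _ _
    exact Polynomial.map_injective _ h8 (by rwa [Polynomial.map_zero])

/-- Key induction: if the content of `f - f(0)` is trivial and
`aeval f Q = C r * g` with `r ≠ 0`, then `g` is a polynomial in `f`. -/
lemma auxC {R : Type*} [CommRing R] [IsDomain R] [UniqueFactorizationMonoid R] {n : ℕ}
    (f : MvPolynomial (Fin n) R)
    (hcont : ∀ d : R, (∀ m : Fin n →₀ ℕ, d ∣ (f - C (f.coeff 0)).coeff m) → IsUnit d)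
    (r : R) :
    r ≠ 0 → ∀ Q : Polynomial R, ∀ g : MvPolynomial (Fin n) R,
      Polynomial.aeval f Q = C r * g → ∃ Q' : Polynomial R, Polynomial.aeval f Q' = g := by
  induction r using UniqueFactorizationMonoid.induction_on_prime with
  | h₁ => exact fun h => absurd rfl h
  | h₂ u hu =>
    intro _ Q g hQ
    obtain ⟨v, hv⟩ := hu.exists_left_inv
    refine ⟨Polynomial.C v * Q, ?_⟩
    rw [map_mul, hQ, Polynomial.aeval_C, MvPolynomial.algebraMap_eq, ← mul_assoc,
      ← MvPolynomial.C_mul, hv, MvPolynomial.C_1, one_mul]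
  | h₃ a p ha hp ih =>
    intro _ Q g hQ
    haveI hI : (Ideal.span {p}).IsPrime := (Ideal.span_singleton_prime hp.ne_zero).mpr hp
    set π := Ideal.Quotient.mk (Ideal.span {p}) with hπ
    have hπ0 : ∀ x : R, π x = 0 ↔ p ∣ x := by
      intro x
      rw [Ideal.Quotient.eq_zero_iff_mem, Ideal.mem_span_singleton]
    -- the image of f is non-constant
    obtain ⟨m, hm⟩ : ∃ m, ¬ p ∣ (f - C (f.coeff 0)).coeff m := by
      by_contra hcon
      push_neg at hcon
      exact hp.not_unit (hcont p hcon)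
    have hm0 : m ≠ 0 := by
      intro h
      apply hm
      rw [h]
      simp [MvPolynomial.coeff_sub]
    have hfm : ¬ p ∣ f.coeff m := by
      rwa [MvPolynomial.coeff_sub, MvPolynomial.coeff_C, if_neg (fun h => hm0 h.symm),
        sub_zero] at hm
    have hcoeffmap : (MvPolynomial.map π f).coeff m ≠ 0 := by
      rw [MvPolynomial.coeff_map]
      intro h
      exact hfm ((hπ0 _).mp h)
    have htr := aux_transcendental (MvPolynomial.map π f) m hm0 hcoeffmap
    -- image of Q is zero
    have h1 : Polynomial.aeval (MvPolynomial.map π f) (Q.map π) = 0 := by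
      rw [← map_polyAeval, hQ, map_mul, MvPolynomial.map_C]
      have : π (p * a) = 0 := (hπ0 _).mpr ⟨a, rfl⟩
      rw [this, MvPolynomial.C_0, zero_mul]
    have h2 : Q.map π = 0 := (transcendental_iff.mp htr) _ h1
    have key : ∀ i, p ∣ Q.coeff i := by
      intro i
      rw [← hπ0]
      have := congrArg (fun q => Polynomial.coeff q i) h2
      simpa [Polynomial.coeff_map] using this
    obtain ⟨Q₁, rfl⟩ := (Polynomial.C_dvd_iff_dvd_coeff p Q).mpr key
    have h3 : MvPolynomial.C p * Polynomial.aeval f Q₁ = MvPolynomial.C p * (C a * g) := by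
      rw [show (MvPolynomial.C p : MvPolynomial (Fin n) R) * (C a * g) = C (p * a) * g by
        rw [MvPolynomial.C_mul, mul_assoc], ← hQ, map_mul, Polynomial.aeval_C,
        MvPolynomial.algebraMap_eq]
    have hCp : (MvPolynomial.C p : MvPolynomial (Fin n) R) ≠ 0 := by
      simpa using hp.ne_zero
    exact ih ha Q₁ g (mul_left_cancel₀ hCp h3)

/-- **Lemma 1.3.** Let `R` be a UFD and `f ∈ R[x_1,…,x_n]` non-constant.  Then the content
`c(f - f(0,…,0))` (the gcd of the coefficients) is a unit of `R` iff
`Q(R)[f] ∩ R[x_1,…,x_n] = R[f]`.  (That the coefficients of `f - f(0,…,0)` have a unit gcd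
is expressed by saying that every common divisor of them is a unit.) -/
theorem content_isUnit_iff_adjoin_cap_eq
    (R : Type*) [CommRing R] [IsDomain R] [UniqueFactorizationMonoid R] (n : ℕ)
    (f : MvPolynomial (Fin n) R) (hf : ∀ r : R, f ≠ C r) :
    (∀ d : R, (∀ m : Fin n →₀ ℕ, d ∣ (f - C (f.coeff 0)).coeff m) → IsUnit d)
      ↔ ∀ g : MvPolynomial (Fin n) R,
          MvPolynomial.map (algebraMap R (FractionRing R)) g ∈
              Algebra.adjoin (FractionRing R)
                {MvPolynomial.map (algebraMap R (FractionRing R)) f}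
            ↔ g ∈ Algebra.adjoin R {f} := by
  set K := FractionRing R with hK
  set a := algebraMap R K with ha
  have hainj : Function.Injective a := IsFractionRing.injective R K
  have hmapinj : Function.Injective (MvPolynomial.map (σ := Fin n) a) :=
    MvPolynomial.map_injective a hainj
  -- a nonzero coefficient at a nonzero monomial
  have hsub : f - C (f.coeff 0) ≠ 0 := sub_ne_zero.mpr (hf _)
  obtain ⟨m₀, hm₀⟩ : ∃ m, (f - C (f.coeff 0)).coeff m ≠ 0 := by
    by_contra hcon
    push_neg at hcon
    exact hsub (MvPolynomial.ext _ _ fun m => by rw [hcon m, MvPolynomial.coeff_zero])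
  have hm₀0 : m₀ ≠ 0 := by
    intro h
    apply hm₀
    rw [h]
    simp [MvPolynomial.coeff_sub]
  have hfm₀ : f.coeff m₀ ≠ 0 := by
    rwa [MvPolynomial.coeff_sub, MvPolynomial.coeff_C, if_neg (fun h => hm₀0 h.symm),
      sub_zero] at hm₀
  constructor
  · intro hcont g
    constructor
    · -- hard direction
      intro hg
      rw [Algebra.adjoin_singleton_eq_range_aeval] at hg
      obtain ⟨P, hP⟩ := hg
      have hP' : Polynomial.aeval (MvPolynomial.map a f) P = MvPolynomial.map a g := hP
      obtain ⟨b, hb⟩ := IsLocalization.integerNormalization_map_to_map (nonZeroDivisors R) P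
      set Q₀ := IsLocalization.integerNormalization (nonZeroDivisors R) P with hQ₀
      have hbne : (b : R) ≠ 0 := nonZeroDivisors.coe_ne_zero b
      have hcomm : MvPolynomial.map a (Polynomial.aeval f Q₀) =
          MvPolynomial.map a (C (b : R) * g) := by
        rw [map_polyAeval, hb, map_mul, MvPolynomial.map_C]
        have h1 : ((b : R) • P) = Polynomial.C (a (b : R)) * P := by
          rw [← Polynomial.smul_eq_C_mul, ← algebraMap_smul K]
        rw [h1, map_mul, Polynomial.aeval_C, MvPolynomial.algebraMap_eq, hP']
      have heq : Polynomial.aeval f Q₀ = C (b : R) * g := hmapinj hcomm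
      obtain ⟨Q', hQ'⟩ := auxC f hcont (b : R) hbne Q₀ g heq
      rw [Algebra.adjoin_singleton_eq_range_aeval]
      exact ⟨Q', hQ'⟩
    · -- easy direction
      intro hg
      rw [Algebra.adjoin_singleton_eq_range_aeval] at hg
      obtain ⟨Q, hQ⟩ := hg
      have hQ' : Polynomial.aeval f Q = g := hQ
      rw [Algebra.adjoin_singleton_eq_range_aeval]
      exact ⟨Q.map a, show Polynomial.aeval (MvPolynomial.map a f) (Q.map a) =
        MvPolynomial.map a g by rw [← hQ', map_polyAeval]⟩
  · intro h d hd
    obtain ⟨g, hg⟩ := (MvPolynomial.C_dvd_iff_dvd_coeff d _).mpr hd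
    have hd0 : d ≠ 0 := by
      intro hd0
      apply hsub
      rw [hg, hd0, MvPolynomial.C_0, zero_mul]
    have had : a d ≠ 0 := fun had => hd0 (hainj (by rw [had, map_zero]))
    set P : Polynomial K :=
      Polynomial.C (a d)⁻¹ * (Polynomial.X - Polynomial.C (a (f.coeff 0))) with hPdef
    have hPeval : Polynomial.aeval (MvPolynomial.map a f) P = MvPolynomial.map a g := by
      rw [hPdef, map_mul, map_sub, Polynomial.aeval_X, Polynomial.aeval_C, Polynomial.aeval_C,
        MvPolynomial.algebraMap_eq]
      have h1 : MvPolynomial.map a f - C (a (f.coeff 0)) = MvPolynomial.map a (f - C (f.coeff 0)) := by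
        rw [map_sub, MvPolynomial.map_C]
      rw [h1, hg, map_mul, MvPolynomial.map_C, ← mul_assoc, ← MvPolynomial.C_mul,
        inv_mul_cancel₀ had, MvPolynomial.C_1, one_mul]
    have hmem : MvPolynomial.map a g ∈ Algebra.adjoin K {MvPolynomial.map a f} := by
      rw [Algebra.adjoin_singleton_eq_range_aeval]
      exact ⟨P, hPeval⟩
    obtain ⟨Q, hQ⟩ := by
      have := (h g).mp hmem
      rwa [Algebra.adjoin_singleton_eq_range_aeval] at this
    have hQ' : Polynomial.aeval f Q = g := hQ
    -- transcendence of map a f over K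
    have hcoeffmap : (MvPolynomial.map a f).coeff m₀ ≠ 0 := by
      rw [MvPolynomial.coeff_map]
      exact fun hh => hfm₀ (hainj (by rw [hh, map_zero]))
    have htr := aux_transcendental (MvPolynomial.map a f) m₀ hm₀0 hcoeffmap
    have hQP : Q.map a = P := by
      have h2 : Polynomial.aeval (MvPolynomial.map a f) (Q.map a - P) = 0 := by
        rw [map_sub, ← map_polyAeval, hQ', hPeval, sub_self]
      have h3 := (transcendental_iff.mp htr) _ h2
      exact sub_eq_zero.mp h3
    have hc1 : a (Q.coeff 1) = (a d)⁻¹ := by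
      have := congrArg (fun q => Polynomial.coeff q 1) hQP
      simpa [hPdef, Polynomial.coeff_map, Polynomial.coeff_C_mul, Polynomial.coeff_sub,
        Polynomial.coeff_C] using this
    have : d * Q.coeff 1 = 1 := by
      apply hainj
      rw [map_mul, hc1, map_one, mul_inv_cancel₀ had]
    exact IsUnit.of_mul_eq_one (a := d) _ this
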